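/- Let B be a connected k-category admitting a universal covering U : 𝒰 → B, and let F : C → B be a Galois covering. Then Aut₁U acts transitively (on the right, by precomposition) on the set of k-linear functors X : 𝒰 → C with F ∘ X = U: for any such X and X', there exists g ∈ Aut₁U with X ∘ g = X'. -/

import Mathlib

open CategoryTheory

universe w v u

section CoveringDefs

variable (k : Type w) [CommRing k]

/-- A functor between `k`-linear categories is `k`-linear:
it is additive and commutes with the scalar action on morphisms. -/
def IsLinearFunctor {C : Type u} [Category.{v} C] [Preadditive C] [CategoryTheory.Linear k C]
    {B : Type u} [Category.{v} B] [Preadditive B] [CategoryTheory.Linear k B]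
    (F : C ⥤ B) : Prop :=
  (∀ (x y : C) (f g : x ⟶ y), F.map (f + g) = F.map f + F.map g) ∧
  (∀ (x y : C) (r : k) (f : x ⟶ y), F.map (r • f) = r • F.map f)

variable {C : Type u} [Category.{v} C] [Preadditive C] [CategoryTheory.Linear k C]
variable {B : Type u} [Category.{v} B] [Preadditive B] [CategoryTheory.Linear k B]

/-- The canonical map `⊕_{y ∈ F⁻¹(c)} C(x,y) →+ B(F(x),c)` induced by `F`
on the source star. -/
noncomputable def starOutHom (F : C ⥤ B) (hF : IsLinearFunctor k F) (x : C) (c : B) :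
    (DirectSum {y : C // F.obj y = c} (fun y => (x ⟶ y.1))) →+ (F.obj x ⟶ c) := by
  classical
  exact DirectSum.toAddMonoid fun y =>
    AddMonoidHom.mk' (fun f => F.map f ≫ eqToHom y.2)
      (fun f g => by (try simp only []); rw [hF.1 _ _ f g, Preadditive.add_comp])

/-- The canonical map `⊕_{y ∈ F⁻¹(c)} C(y,x) →+ B(c,F(x))` induced by `F`
on the target star. -/
noncomputable def starInHom (F : C ⥤ B) (hF : IsLinearFunctor k F) (x : C) (c : B) :
    (DirectSum {y : C // F.obj y = c} (fun y => (y.1 ⟶ x))) →+ (c ⟶ F.obj x) := by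
  classical
  exact DirectSum.toAddMonoid fun y =>
    AddMonoidHom.mk' (fun f => eqToHom y.2.symm ≫ F.map f)
      (fun f g => by (try simp only []); rw [hF.1 _ _ f g, Preadditive.comp_add])

/-- `F : C ⥤ B` is a covering of `k`-categories: it is a `k`-linear functor,
surjective on objects, inducing bijections on all source and target stars. -/
def IsCovering (F : C ⥤ B) : Prop :=
  ∃ hF : IsLinearFunctor k F,
    Function.Surjective F.obj ∧
    (∀ (x : C) (c : B), Function.Bijective (starOutHom k F hF x c)) ∧
    (∀ (x : C) (c : B), Function.Bijective (starInHom k F hF x c))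

end CoveringDefs

/-- A `k`-category is connected if the equivalence relation generated by
"there is a nonzero morphism from `x` to `y`" relates any two objects. -/
def IsConnectedKCat (C : Type u) [Category.{v} C] [Preadditive C] : Prop :=
  ∀ x y : C, Relation.EqvGen (fun a b : C => ∃ f : a ⟶ b, f ≠ 0) x y

section GaloisDefs

variable (k : Type w) [CommRing k]
variable {C : Type u} [Category.{v} C] [Preadditive C] [CategoryTheory.Linear k C]
variable {B : Type u} [Category.{v} B] [Preadditive B] [CategoryTheory.Linear k B]
variable {D : Type u} [Category.{v} D] [Preadditive D] [CategoryTheory.Linear k D]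

/-- `H` belongs to `Aut₁ F`: it is an invertible `k`-linear endofunctor with `F ∘ H = F`. -/
def MemAut1 (F : C ⥤ B) (H : C ⥤ C) : Prop :=
  IsLinearFunctor k H ∧
  (∃ Hinv : C ⥤ C, H ⋙ Hinv = 𝟭 C ∧ Hinv ⋙ H = 𝟭 C) ∧
  H ⋙ F = F

/-- A covering is Galois if its source is connected and `Aut₁ F` acts transitively
on some fibre. -/
def IsGaloisCovering (F : C ⥤ B) : Prop :=
  IsCovering k F ∧ IsConnectedKCat C ∧
  ∃ b₀ : B, ∀ x y : C, F.obj x = b₀ → F.obj y = b₀ →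
    ∃ H : C ⥤ C, MemAut1 k F H ∧ H.obj x = y

/-- A morphism `(H, J)` of coverings from `F : C ⥤ B` to `G : D ⥤ B`:
`H` and `J` are `k`-linear, `J` is an isomorphism which is the identity on objects,
and `G ∘ H = J ∘ F`. -/
def IsCoveringMorphism (F : C ⥤ B) (G : D ⥤ B) (H : C ⥤ D) (J : B ⥤ B) : Prop :=
  IsLinearFunctor k H ∧ IsLinearFunctor k J ∧
  (∃ Jinv : B ⥤ B, J ⋙ Jinv = 𝟭 B ∧ Jinv ⋙ J = 𝟭 B) ∧
  (∀ b : B, J.obj b = b) ∧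
  H ⋙ G = F ⋙ J

end GaloisDefs

/-- A universal covering: a Galois covering `U` such that for every Galois covering
`F : C ⥤ B` and every pair of objects `u₀`, `c₀` above the same object of `B`,
there is a unique `k`-linear functor `H` with `F ∘ H = U` and `H u₀ = c₀`. -/
def IsUniversalCovering (k : Type w) [CommRing k]
    {U' : Type u} [Category.{v} U'] [Preadditive U'] [CategoryTheory.Linear k U']
    {B : Type u} [Category.{v} B] [Preadditive B] [CategoryTheory.Linear k B]
    (U : U' ⥤ B) : Prop :=
  IsGaloisCovering k U ∧
  ∀ (C : Type u) [Category.{v} C] [Preadditive C] [CategoryTheory.Linear k C]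
    (F : C ⥤ B), IsGaloisCovering k F →
    ∀ (u₀ : U') (c₀ : C), U.obj u₀ = F.obj c₀ →
      ∃! H : U' ⥤ C, IsLinearFunctor k H ∧ H ⋙ F = U ∧ H.obj u₀ = c₀

/-- Given a functor `F : C ⥤ B`, a choice `x` of objects of `C` above each object of `B`,
and an endofunctor `H` of `C`, the subset `Z_H(c,b) = F(C(x_b, H x_c))` of `B(b,c)`. -/
def gradeSet {C : Type u} [Category.{v} C] {B : Type u} [Category.{v} B]
    (F : C ⥤ B) (x : B → C) (H : C ⥤ C) (b c : B) : Set (b ⟶ c) :=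
  {g | ∃ (h₁ : b = F.obj (x b)) (h₂ : F.obj (H.obj (x c)) = c)
        (f : x b ⟶ H.obj (x c)), g = eqToHom h₁ ≫ F.map f ≫ eqToHom h₂}

/-- The homogeneous component `Z_H(c,b)` as a `k`-submodule of `B(b,c)`. -/
noncomputable def gradeSubmodule (k : Type w) [CommRing k]
    {C : Type u} [Category.{v} C]
    {B : Type u} [Category.{v} B] [Preadditive B] [CategoryTheory.Linear k B]
    (F : C ⥤ B) (x : B → C) (H : C ⥤ C) (b c : B) : Submodule k (b ⟶ c) :=
  Submodule.span k (gradeSet F x H b c)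

section AuxProof

variable {k : Type w} [CommRing k]
variable {U' : Type u} [Category.{v} U'] [Preadditive U'] [CategoryTheory.Linear k U']
variable {B : Type u} [Category.{v} B] [Preadditive B] [CategoryTheory.Linear k B]
variable {C : Type u} [Category.{v} C] [Preadditive C] [CategoryTheory.Linear k C]

lemma starOutHom_of (F : C ⥤ B) (hF : IsLinearFunctor k F) (x : C) (c : B)
    [DecidableEq {y : C // F.obj y = c}]
    (y : {y : C // F.obj y = c}) (f : x ⟶ y.1) :
    starOutHom k F hF x c (DirectSum.of (fun y : {y : C // F.obj y = c} => (x ⟶ y.1)) y f)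
      = F.map f ≫ eqToHom y.2 := by
  unfold starOutHom
  exact DirectSum.toAddMonoid_of _ _ _

lemma starInHom_of (F : C ⥤ B) (hF : IsLinearFunctor k F) (x : C) (c : B)
    [DecidableEq {y : C // F.obj y = c}]
    (y : {y : C // F.obj y = c}) (f : y.1 ⟶ x) :
    starInHom k F hF x c (DirectSum.of (fun y : {y : C // F.obj y = c} => (y.1 ⟶ x)) y f)
      = eqToHom y.2.symm ≫ F.map f := by
  unfold starInHom
  exact DirectSum.toAddMonoid_of _ _ _

lemma step_out (U : U' ⥤ B) (F : C ⥤ B)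
    (hUlin : IsLinearFunctor k U) (hFlin : IsLinearFunctor k F)
    (hUout : ∀ (x : U') (c : B), Function.Bijective (starOutHom k U hUlin x c))
    (hFout : ∀ (x : C) (c : B), Function.Bijective (starOutHom k F hFlin x c))
    (X : U' ⥤ C) (hXlin : IsLinearFunctor k X) (hX : X ⋙ F = U)
    (u : U') (b : C) (f : X.obj u ⟶ b) (hf : f ≠ 0) : ∃ v : U', X.obj v = b := by
  classical
  by_contra hcon
  push_neg at hcon
  have e' : F.obj (X.obj u) = U.obj u := Functor.congr_obj hX u
  obtain ⟨s, hs⟩ := (hUout u (F.obj b)).2 (eqToHom e'.symm ≫ F.map f)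
  let φ : ∀ y : {y : U' // U.obj y = F.obj b},
      (u ⟶ y.1) →+ DirectSum {d : C // F.obj d = F.obj b} (fun d => (X.obj u ⟶ d.1)) :=
    fun y => (DirectSum.of (fun d : {d : C // F.obj d = F.obj b} => (X.obj u ⟶ d.1))
        ⟨X.obj y.1, (Functor.congr_obj hX y.1).trans y.2⟩).comp
      (AddMonoidHom.mk' (fun g => X.map g) (fun g h => hXlin.1 _ _ g h))
  let ψ := DirectSum.toAddMonoid φ
  have key : (starOutHom k F hFlin (X.obj u) (F.obj b)).comp ψ
      = (AddMonoidHom.mk' (fun g : (U.obj u ⟶ F.obj b) => eqToHom e' ≫ g)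
          (fun g h => by rw [Preadditive.comp_add])).comp
        (starOutHom k U hUlin u (F.obj b)) := by
    refine DirectSum.addHom_ext fun y g => ?_
    have hc := Functor.congr_hom hX g
    simp only [Functor.comp_map] at hc
    simp only [AddMonoidHom.comp_apply, AddMonoidHom.mk'_apply, ψ,
      DirectSum.toAddMonoid_of, φ]
    rw [starOutHom_of, starOutHom_of, hc]
    simp [eqToHom_trans]
  have h1 : starOutHom k F hFlin (X.obj u) (F.obj b) (ψ s) = F.map f := by
    have := DFunLike.congr_fun key s
    simp only [AddMonoidHom.comp_apply, AddMonoidHom.mk'_apply, hs] at this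
    rw [this]
    simp
  have h2 : starOutHom k F hFlin (X.obj u) (F.obj b)
      (DirectSum.of (fun d : {d : C // F.obj d = F.obj b} => (X.obj u ⟶ d.1)) ⟨b, rfl⟩ f)
      = F.map f := by
    rw [starOutHom_of]; simp
  have h3 : ψ s = DirectSum.of (fun d : {d : C // F.obj d = F.obj b} => (X.obj u ⟶ d.1))
      ⟨b, rfl⟩ f := (hFout _ _).1 (h1.trans h2.symm)
  let π : DirectSum {d : C // F.obj d = F.obj b} (fun d => (X.obj u ⟶ d.1)) →+ (X.obj u ⟶ b) :=
    DirectSum.toAddMonoid (fun d => if h : d.1 = b then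
      AddMonoidHom.mk' (fun g => g ≫ eqToHom h) (fun g h' => by rw [Preadditive.add_comp])
      else 0)
  have hπψ : π.comp ψ = 0 := by
    refine DirectSum.addHom_ext fun y g => ?_
    simp only [AddMonoidHom.comp_apply, ψ, DirectSum.toAddMonoid_of, φ,
      AddMonoidHom.mk'_apply, π, AddMonoidHom.zero_apply]
    rw [dif_neg (hcon y.1)]
    rfl
  have hz : π (ψ s) = 0 := by rw [← AddMonoidHom.comp_apply, hπψ]; rfl
  rw [h3] at hz
  simp only [π, DirectSum.toAddMonoid_of] at hz
  simp at hz
  exact hf hz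

lemma step_in (U : U' ⥤ B) (F : C ⥤ B)
    (hUlin : IsLinearFunctor k U) (hFlin : IsLinearFunctor k F)
    (hUin : ∀ (x : U') (c : B), Function.Bijective (starInHom k U hUlin x c))
    (hFin : ∀ (x : C) (c : B), Function.Bijective (starInHom k F hFlin x c))
    (X : U' ⥤ C) (hXlin : IsLinearFunctor k X) (hX : X ⋙ F = U)
    (u : U') (b : C) (f : b ⟶ X.obj u) (hf : f ≠ 0) : ∃ v : U', X.obj v = b := by
  classical
  by_contra hcon
  push_neg at hcon
  have e' : F.obj (X.obj u) = U.obj u := Functor.congr_obj hX u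
  obtain ⟨s, hs⟩ := (hUin u (F.obj b)).2 (F.map f ≫ eqToHom e')
  let φ : ∀ y : {y : U' // U.obj y = F.obj b},
      (y.1 ⟶ u) →+ DirectSum {d : C // F.obj d = F.obj b} (fun d => (d.1 ⟶ X.obj u)) :=
    fun y => (DirectSum.of (fun d : {d : C // F.obj d = F.obj b} => (d.1 ⟶ X.obj u))
        ⟨X.obj y.1, (Functor.congr_obj hX y.1).trans y.2⟩).comp
      (AddMonoidHom.mk' (fun g => X.map g) (fun g h => hXlin.1 _ _ g h))
  let ψ := DirectSum.toAddMonoid φ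
  have key : (starInHom k F hFlin (X.obj u) (F.obj b)).comp ψ
      = (AddMonoidHom.mk' (fun g : (F.obj b ⟶ U.obj u) => g ≫ eqToHom e'.symm)
          (fun g h => by rw [Preadditive.add_comp])).comp
        (starInHom k U hUlin u (F.obj b)) := by
    refine DirectSum.addHom_ext fun y g => ?_
    have hc := Functor.congr_hom hX g
    simp only [Functor.comp_map] at hc
    simp only [AddMonoidHom.comp_apply, AddMonoidHom.mk'_apply, ψ,
      DirectSum.toAddMonoid_of, φ]
    rw [starInHom_of, starInHom_of, hc]
    simp [eqToHom_trans]
  have h1 : starInHom k F hFlin (X.obj u) (F.obj b) (ψ s) = F.map f := by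
    have := DFunLike.congr_fun key s
    simp only [AddMonoidHom.comp_apply, AddMonoidHom.mk'_apply, hs] at this
    rw [this]
    simp
  have h2 : starInHom k F hFlin (X.obj u) (F.obj b)
      (DirectSum.of (fun d : {d : C // F.obj d = F.obj b} => (d.1 ⟶ X.obj u)) ⟨b, rfl⟩ f)
      = F.map f := by
    rw [starInHom_of]; simp
  have h3 : ψ s = DirectSum.of (fun d : {d : C // F.obj d = F.obj b} => (d.1 ⟶ X.obj u))
      ⟨b, rfl⟩ f := (hFin _ _).1 (h1.trans h2.symm)
  let π : DirectSum {d : C // F.obj d = F.obj b} (fun d => (d.1 ⟶ X.obj u)) →+ (b ⟶ X.obj u) :=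
    DirectSum.toAddMonoid (fun d => if h : d.1 = b then
      AddMonoidHom.mk' (fun g => eqToHom h.symm ≫ g) (fun g h' => by rw [Preadditive.comp_add])
      else 0)
  have hπψ : π.comp ψ = 0 := by
    refine DirectSum.addHom_ext fun y g => ?_
    simp only [AddMonoidHom.comp_apply, ψ, DirectSum.toAddMonoid_of, φ,
      AddMonoidHom.mk'_apply, π, AddMonoidHom.zero_apply]
    rw [dif_neg (hcon y.1)]
    rfl
  have hz : π (ψ s) = 0 := by rw [← AddMonoidHom.comp_apply, hπψ]; rfl
  rw [h3] at hz
  simp only [π, DirectSum.toAddMonoid_of] at hz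
  simp at hz
  exact hf hz


lemma linear_comp {A1 : Type u} [Category.{v} A1] [Preadditive A1] [CategoryTheory.Linear k A1]
    {A2 : Type u} [Category.{v} A2] [Preadditive A2] [CategoryTheory.Linear k A2]
    {A3 : Type u} [Category.{v} A3] [Preadditive A3] [CategoryTheory.Linear k A3]
    (P : A1 ⥤ A2) (Q : A2 ⥤ A3) (hP : IsLinearFunctor k P) (hQ : IsLinearFunctor k Q) :
    IsLinearFunctor k (P ⋙ Q) :=
  ⟨fun x y f f' => by simp only [Functor.comp_map, hP.1 _ _ f f', hQ.1],
   fun x y r f => by simp only [Functor.comp_map, hP.2 _ _ r f, hQ.2]⟩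

end AuxProof

theorem aut_universal_transitive_on_morphisms (k : Type w) [CommRing k]
    {U' : Type u} [Category.{v} U'] [Preadditive U'] [CategoryTheory.Linear k U']
    {B : Type u} [Category.{v} B] [Preadditive B] [CategoryTheory.Linear k B]
    {C : Type u} [Category.{v} C] [Preadditive C] [CategoryTheory.Linear k C]
    (hB : IsConnectedKCat B)
    (U : U' ⥤ B) (hU : IsUniversalCovering k U)
    (F : C ⥤ B) (hF : IsGaloisCovering k F)
    (X X' : U' ⥤ C) (hXlin : IsLinearFunctor k X) (hX : X ⋙ F = U)
    (hX'lin : IsLinearFunctor k X') (hX' : X' ⋙ F = U) :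
    ∃ g : U' ⥤ U', MemAut1 k U g ∧ g ⋙ X = X' := by
  classical
  have idlin : IsLinearFunctor k (𝟭 U') := ⟨fun x y f g => rfl, fun x y r f => rfl⟩
  by_cases hne : Nonempty U'
  · obtain ⟨u₀⟩ := hne
    -- covering data
    obtain ⟨hUlin, hUsurj, hUout, hUin⟩ := hU.1.1
    obtain ⟨hFlin, hFsurj, hFout, hFin⟩ := hF.1
    -- X is surjective on objects
    have hXsurj : ∀ c : C, ∃ v : U', X.obj v = c := by
      intro c
      have hconn := hF.2.1 (X.obj u₀) c
      have main : ∀ p q : C, Relation.EqvGen (fun a b : C => ∃ f : a ⟶ b, f ≠ 0) p q →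
          ((∃ v, X.obj v = p) ↔ (∃ v, X.obj v = q)) := by
        intro p q h
        induction h with
        | rel a b hab =>
          obtain ⟨f, hf⟩ := hab
          constructor
          · rintro ⟨v, rfl⟩
            exact step_out U F hUlin hFlin hUout hFout X hXlin hX v b f hf
          · rintro ⟨v, rfl⟩
            exact step_in U F hUlin hFlin hUin hFin X hXlin hX v a f hf
        | refl a => exact Iff.rfl
        | symm a b _ ih => exact ih.symm
        | trans a b c _ _ ih1 ih2 => exact ih1.trans ih2
      exact (main _ _ hconn).mp ⟨u₀, rfl⟩
    obtain ⟨u₁, hu₁⟩ := hXsurj (X'.obj u₀)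
    -- fibre condition
    have huu : U.obj u₀ = U.obj u₁ := by
      rw [← Functor.congr_obj hX' u₀, ← Functor.congr_obj hX u₁]
      exact congrArg F.obj hu₁.symm
    -- deck transformation g with g u₀ = u₁
    have hUGal := hU.1
    obtain ⟨g, ⟨hglin, hgU, hgu₀⟩, _⟩ := hU.2 U' U hUGal u₀ u₁ huu
    obtain ⟨g', ⟨hg'lin, hg'U, hg'u₁⟩, _⟩ := hU.2 U' U hUGal u₁ u₀ huu.symm
    obtain ⟨K, _, hKuniq⟩ := hU.2 U' U hUGal u₀ u₀ rfl
    have hgg' : g ⋙ g' = 𝟭 U' := by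
      have h1 := hKuniq (g ⋙ g') ⟨linear_comp g g' hglin hg'lin,
        by rw [Functor.assoc, hg'U, hgU],
        by simp only [Functor.comp_obj, hgu₀, hg'u₁]⟩
      have h2 := hKuniq (𝟭 U') ⟨idlin, Functor.id_comp U, rfl⟩
      rw [h1, h2]
    obtain ⟨K', _, hK'uniq⟩ := hU.2 U' U hUGal u₁ u₁ rfl
    have hg'g : g' ⋙ g = 𝟭 U' := by
      have h1 := hK'uniq (g' ⋙ g) ⟨linear_comp g' g hg'lin hglin,
        by rw [Functor.assoc, hgU, hg'U],
        by simp only [Functor.comp_obj, hg'u₁, hgu₀]⟩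
      have h2 := hK'uniq (𝟭 U') ⟨idlin, Functor.id_comp U, rfl⟩
      rw [h1, h2]
    refine ⟨g, ⟨hglin, ⟨g', hgg', hg'g⟩, hgU⟩, ?_⟩
    -- uniqueness of lifts through F
    have hfib : U.obj u₀ = F.obj (X'.obj u₀) := (Functor.congr_obj hX' u₀).symm
    obtain ⟨H, _, hHuniq⟩ := hU.2 C F hF u₀ (X'.obj u₀) hfib
    have e1 := hHuniq (g ⋙ X) ⟨linear_comp g X hglin hXlin,
      by rw [Functor.assoc, hX, hgU],
      by rw [Functor.comp_obj, hgu₀, hu₁]⟩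
    have e2 := hHuniq X' ⟨hX'lin, hX', rfl⟩
    rw [e1, e2]
  · refine ⟨𝟭 U', ⟨idlin, ⟨𝟭 U', Functor.id_comp _, Functor.id_comp _⟩,
      Functor.id_comp U⟩, ?_⟩
    rw [Functor.id_comp]
    exact CategoryTheory.Functor.ext (h_obj := fun x => (hne ⟨x⟩).elim)
      (h_map := fun x y f => (hne ⟨x⟩).elim)
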